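/- Let α ∈ [0,1), let s ≥ 1 be an integer, and set n = s + ⌊3s/2⌋ + 2. Then the A_α-spectral radius of G = K_s ∨ ((⌊3s/2⌋+2)K₁) equals the largest real root of x² − (αn + s − 1)x + (2α−1)s⌊3s/2⌋ + αs² + (3α−2)s = 0; equivalently, ρ_α(G) = (αn + s − 1 + √((αn+s−1)² − 4((2α−1)s⌊3s/2⌋ + αs² + 3αs − 2s)))/2. -/

import Mathlib

open Finset

/-- The join `G ∨g H` of two graphs: the disjoint union together with all edges
between the two parts. -/
def SimpleGraph.gjoin {α β : Type*} (G : SimpleGraph α) (H : SimpleGraph β) :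
    SimpleGraph (α ⊕ β) where
  Adj u v := match u, v with
    | Sum.inl u, Sum.inl v => G.Adj u v
    | Sum.inr u, Sum.inr v => H.Adj u v
    | _, _ => True
  symm := ⟨fun u v => match u, v with
    | Sum.inl u, Sum.inl v => G.adj_symm
    | Sum.inr u, Sum.inr v => H.adj_symm
    | Sum.inl _, Sum.inr _ | Sum.inr _, Sum.inl _ => fun _ => trivial⟩
  loopless := ⟨fun u => by cases u <;> simp⟩

infixl:60 " ∨g " => SimpleGraph.gjoin

/-- The `A_α`-matrix `α • D(G) + (1-α) • A(G)` of a graph `G`. -/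
noncomputable def aAlphaMatrix {V : Type*} [Fintype V] [DecidableEq V]
    (α : ℝ) (G : SimpleGraph V) : Matrix V V ℝ := by
  classical
  exact α • Matrix.diagonal (fun v => (G.degree v : ℝ)) + (1 - α) • G.adjMatrix ℝ

/-- The `A_α`-spectral radius `ρ_α(G)`: the largest eigenvalue of `A_α(G)`. -/
noncomputable def rhoAlpha {V : Type*} [Fintype V] [DecidableEq V]
    (α : ℝ) (G : SimpleGraph V) : ℝ :=
  sSup (spectrum ℝ (aAlphaMatrix α G))

/-- The signless Laplacian matrix `Q(G) = D(G) + A(G)`. -/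
noncomputable def signlessLaplacian {V : Type*} [Fintype V] [DecidableEq V]
    (G : SimpleGraph V) : Matrix V V ℝ := by
  classical
  exact Matrix.diagonal (fun v => (G.degree v : ℝ)) + G.adjMatrix ℝ

/-- `q(G)`: the largest eigenvalue of the signless Laplacian matrix of `G`. -/
noncomputable def qIndex {V : Type*} [Fintype V] [DecidableEq V]
    (G : SimpleGraph V) : ℝ :=
  sSup (spectrum ℝ (signlessLaplacian G))

/-- The number of edges (the size) of a graph. -/
noncomputable def edgeCount {V : Type*} [Fintype V] [DecidableEq V]
    (G : SimpleGraph V) : ℕ := by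
  classical
  exact G.edgeFinset.card

/-- `i(G - S)`: the number of isolated vertices of the graph obtained from `G`
by deleting the vertices of `S` together with all edges incident to `S`. -/
noncomputable def isolGminus {V : Type*} [Fintype V] [DecidableEq V]
    (G : SimpleGraph V) (S : Finset V) : ℕ := by
  classical
  exact (Finset.univ.filter (fun v => v ∉ S ∧ ∀ u, G.Adj v u → u ∈ S)).card

/-- `F(n)`: the edge bound from Theorem 1.1. -/
def Fbound (n : ℕ) : ℕ :=
  if n = 6 then 9 else if n = 8 then 18 else (n - 2).choose 2 + 2

/-- `f(α)`: the order bound from Theorem 1.2. -/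
noncomputable def fAlpha (α : ℝ) : ℝ :=
  if α ≤ 1 / 2 then 20 else if α ≤ 5 / 7 then 25 else 7 / (1 - α) + 3

open scoped Classical

section helpers

lemma le_root (B C x : ℝ) (h : x^2 - B*x + C ≤ 0) :
    x ≤ (B + Real.sqrt (B^2 - 4*C))/2 := by
  have h1 : (2*x - B)^2 ≤ B^2 - 4*C := by nlinarith
  have h2 : |2*x - B| ≤ Real.sqrt (B^2-4*C) := Real.abs_le_sqrt h1
  have h3 := abs_le.mp h2
  linarith [h3.2]

lemma root_root (B C : ℝ) (hD : 0 ≤ B^2 - 4*C) :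
    ((B + Real.sqrt (B^2 - 4*C))/2)^2 - B*((B + Real.sqrt (B^2 - 4*C))/2) + C = 0 := by
  have hs : Real.sqrt (B^2 - 4*C) ^ 2 = B^2 - 4*C := Real.sq_sqrt hD
  linear_combination (1/4 : ℝ) * hs

lemma mem_spectrum_iff_eigen {n : Type*} [Fintype n] [DecidableEq n] (M : Matrix n n ℝ) (μ : ℝ) :
    μ ∈ spectrum ℝ M ↔ ∃ v : n → ℝ, v ≠ 0 ∧ M.mulVec v = μ • v := by
  rw [spectrum.mem_iff, Matrix.isUnit_iff_isUnit_det, isUnit_iff_ne_zero, not_ne_iff,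
    ← Matrix.exists_mulVec_eq_zero_iff]
  have halg : (algebraMap ℝ (Matrix n n ℝ)) μ = μ • (1 : Matrix n n ℝ) := by
    simp [Algebra.algebraMap_eq_smul_one]
  constructor
  · rintro ⟨v, hv, h⟩
    refine ⟨v, hv, ?_⟩
    rw [halg, Matrix.sub_mulVec, Matrix.smul_mulVec, Matrix.one_mulVec, sub_eq_zero] at h
    rw [← h]
  · rintro ⟨v, hv, h⟩
    refine ⟨v, hv, ?_⟩
    rw [halg, Matrix.sub_mulVec, Matrix.smul_mulVec, Matrix.one_mulVec, h, sub_self]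

variable {s t : ℕ}

lemma adj_ll (i k : Fin s) :
    ((⊤ : SimpleGraph (Fin s)) ∨g (⊥ : SimpleGraph (Fin t))).Adj (Sum.inl i) (Sum.inl k) ↔ i ≠ k := by
  simp [SimpleGraph.gjoin]

lemma adj_lr (i : Fin s) (j : Fin t) :
    ((⊤ : SimpleGraph (Fin s)) ∨g (⊥ : SimpleGraph (Fin t))).Adj (Sum.inl i) (Sum.inr j) := by
  simp [SimpleGraph.gjoin]

lemma adj_rl (j : Fin t) (i : Fin s) :
    ((⊤ : SimpleGraph (Fin s)) ∨g (⊥ : SimpleGraph (Fin t))).Adj (Sum.inr j) (Sum.inl i) := by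
  simp [SimpleGraph.gjoin]

lemma adj_rr (j k : Fin t) :
    ¬ ((⊤ : SimpleGraph (Fin s)) ∨g (⊥ : SimpleGraph (Fin t))).Adj (Sum.inr j) (Sum.inr k) := by
  simp [SimpleGraph.gjoin]

lemma deg_inl (i : Fin s) :
    ((((⊤ : SimpleGraph (Fin s)) ∨g (⊥ : SimpleGraph (Fin t))).degree (Sum.inl i) : ℕ) : ℝ)
      = (s : ℝ) + (t : ℝ) - 1 := by
  rw [← SimpleGraph.card_neighborFinset_eq_degree, SimpleGraph.neighborFinset_eq_filter,
    Finset.card_filter]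
  push_cast
  rw [Fintype.sum_sum_type]
  simp only [adj_ll, adj_lr, if_true]
  have h1 : ∑ k : Fin s, (if i ≠ k then (1:ℝ) else 0) = (s : ℝ) - 1 := by
    have h0 : ∀ k : Fin s, (if i ≠ k then (1:ℝ) else 0) = 1 - (if i = k then (1:ℝ) else 0) := by
      intro k; by_cases h : i = k <;> simp [h]
    rw [Finset.sum_congr rfl (fun k _ => h0 k), Finset.sum_sub_distrib, Finset.sum_ite_eq]
    simp
  rw [h1]; simp; ring

lemma deg_inr (j : Fin t) :
    ((((⊤ : SimpleGraph (Fin s)) ∨g (⊥ : SimpleGraph (Fin t))).degree (Sum.inr j) : ℕ) : ℝ)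
      = (s : ℝ) := by
  rw [← SimpleGraph.card_neighborFinset_eq_degree, SimpleGraph.neighborFinset_eq_filter,
    Finset.card_filter]
  push_cast
  rw [Fintype.sum_sum_type]
  simp [adj_rl, adj_rr]

lemma adjSum_inl (i : Fin s) (x : Fin s ⊕ Fin t → ℝ) :
    ∑ u ∈ ((⊤ : SimpleGraph (Fin s)) ∨g (⊥ : SimpleGraph (Fin t))).neighborFinset (Sum.inl i), x u
      = ((∑ k, x (Sum.inl k)) - x (Sum.inl i)) + ∑ j, x (Sum.inr j) := by
  rw [SimpleGraph.neighborFinset_eq_filter, Finset.sum_filter, Fintype.sum_sum_type]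
  simp only [adj_ll, adj_lr, if_true]
  have h1 : ∑ k : Fin s, (if i ≠ k then x (Sum.inl k) else 0)
      = (∑ k, x (Sum.inl k)) - x (Sum.inl i) := by
    have h0 : ∀ k : Fin s, (if i ≠ k then x (Sum.inl k) else 0)
        = x (Sum.inl k) - (if i = k then x (Sum.inl k) else 0) := by
      intro k; by_cases h : i = k <;> simp [h]
    rw [Finset.sum_congr rfl (fun k _ => h0 k), Finset.sum_sub_distrib, Finset.sum_ite_eq]
    simp
  rw [h1]

lemma adjSum_inr (j : Fin t) (x : Fin s ⊕ Fin t → ℝ) :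
    ∑ u ∈ ((⊤ : SimpleGraph (Fin s)) ∨g (⊥ : SimpleGraph (Fin t))).neighborFinset (Sum.inr j), x u
      = ∑ k, x (Sum.inl k) := by
  rw [SimpleGraph.neighborFinset_eq_filter, Finset.sum_filter, Fintype.sum_sum_type]
  simp [adj_rl, adj_rr]

lemma mulVec_inl (α : ℝ) (i : Fin s) (x : Fin s ⊕ Fin t → ℝ) :
    (aAlphaMatrix α ((⊤ : SimpleGraph (Fin s)) ∨g (⊥ : SimpleGraph (Fin t)))).mulVec x (Sum.inl i)
      = α * ((s : ℝ) + (t : ℝ) - 1) * x (Sum.inl i)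
        + (1 - α) * (((∑ k, x (Sum.inl k)) - x (Sum.inl i)) + ∑ j, x (Sum.inr j)) := by
  unfold aAlphaMatrix
  rw [Matrix.add_mulVec, Matrix.smul_mulVec, Matrix.smul_mulVec]
  simp only [Pi.add_apply, Pi.smul_apply, smul_eq_mul, Matrix.mulVec_diagonal,
    SimpleGraph.adjMatrix_mulVec_apply, adjSum_inl, deg_inl]
  ring

lemma mulVec_inr (α : ℝ) (j : Fin t) (x : Fin s ⊕ Fin t → ℝ) :
    (aAlphaMatrix α ((⊤ : SimpleGraph (Fin s)) ∨g (⊥ : SimpleGraph (Fin t)))).mulVec x (Sum.inr j)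
      = α * (s : ℝ) * x (Sum.inr j) + (1 - α) * ∑ k, x (Sum.inl k) := by
  unfold aAlphaMatrix
  rw [Matrix.add_mulVec, Matrix.smul_mulVec, Matrix.smul_mulVec]
  simp only [Pi.add_apply, Pi.smul_apply, smul_eq_mul, Matrix.mulVec_diagonal,
    SimpleGraph.adjMatrix_mulVec_apply, adjSum_inr, deg_inr]
  ring

end helpers

set_option maxHeartbeats 1000000 in
/-- Master lemma: the largest point of the spectrum of `A_α(K_s ∨ tK₁)`. -/
lemma spec_isGreatest (α : ℝ) (hα0 : 0 ≤ α) (hα1 : α < 1) (s t : ℕ)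
    (hs : 1 ≤ s) (ht : 1 ≤ t) :
    IsGreatest (spectrum ℝ (aAlphaMatrix α
        ((⊤ : SimpleGraph (Fin s)) ∨g (⊥ : SimpleGraph (Fin t)))))
      ((α * ((s:ℝ) + (t:ℝ)) + (s:ℝ) - 1 +
        Real.sqrt ((α * ((s:ℝ) + (t:ℝ)) + (s:ℝ) - 1)^2
          - 4 * (α * (s:ℝ) * (α * (t:ℝ) + (s:ℝ) - 1) - (1-α)^2 * (s:ℝ) * (t:ℝ))))/2) := by
  have hS : (1:ℝ) ≤ (s:ℝ) := by exact_mod_cast hs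
  have hT : (1:ℝ) ≤ (t:ℝ) := by exact_mod_cast ht
  set S : ℝ := (s:ℝ) with hSdef
  set T : ℝ := (t:ℝ) with hTdef
  have hD : 0 ≤ (α * (S + T) + S - 1)^2 - 4 * (α * S * (α * T + S - 1) - (1-α)^2 * S * T) := by
    nlinarith [sq_nonneg (α*T + S - 1 - α*S),
      mul_nonneg (mul_nonneg (sq_nonneg (1-α)) (by linarith : (0:ℝ) ≤ S)) (by linarith : (0:ℝ) ≤ T)]
  set r : ℝ := (α * (S + T) + S - 1 +
      Real.sqrt ((α * (S + T) + S - 1)^2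
        - 4 * (α * S * (α * T + S - 1) - (1-α)^2 * S * T)))/2 with hr
  have hroot : r^2 - (α * (S + T) + S - 1)*r + (α * S * (α * T + S - 1) - (1-α)^2 * S * T) = 0 := by
    rw [hr]; exact root_root _ _ hD
  constructor
  · -- membership: eigenvector constant a on left, b on right
    rw [mem_spectrum_iff_eigen]
    refine ⟨Sum.elim (fun _ => r - α*S) (fun _ => (1-α)*S), ?_, ?_⟩
    · intro h
      have h0 := congrFun h (Sum.inr ⟨0, ht⟩)
      simp only [Sum.elim_inr, Pi.zero_apply] at h0
      nlinarith
    · funext u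
      cases u with
      | inl i =>
        rw [mulVec_inl]
        simp only [Sum.elim_inl, Sum.elim_inr, Finset.sum_const, Finset.card_univ,
          Fintype.card_fin, nsmul_eq_mul, Pi.smul_apply, smul_eq_mul]
        rw [← hSdef, ← hTdef]
        linear_combination -hroot
      | inr j =>
        rw [mulVec_inr]
        simp only [Sum.elim_inl, Sum.elim_inr, Finset.sum_const, Finset.card_univ,
          Fintype.card_fin, nsmul_eq_mul, Pi.smul_apply, smul_eq_mul]
        rw [← hSdef]
        ring
  · -- upper bound
    rintro μ hμ
    rw [mem_spectrum_iff_eigen] at hμ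
    obtain ⟨v, hv0, hveq⟩ := hμ
    set SL : ℝ := ∑ k, v (Sum.inl k) with hSL
    set SR : ℝ := ∑ j, v (Sum.inr j) with hSR
    have eqL : ∀ i : Fin s, α * (S + T - 1) * v (Sum.inl i)
        + (1-α) * ((SL - v (Sum.inl i)) + SR) = μ * v (Sum.inl i) := by
      intro i
      have h0 := congrFun hveq (Sum.inl i)
      rw [mulVec_inl] at h0
      simpa [← hSdef, ← hTdef, ← hSL, ← hSR] using h0
    have eqR : ∀ j : Fin t, α * S * v (Sum.inr j) + (1-α) * SL = μ * v (Sum.inr j) := by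
      intro j
      have h0 := congrFun hveq (Sum.inr j)
      rw [mulVec_inr] at h0
      simpa [← hSdef, ← hSL] using h0
    have hq : μ^2 - (α * (S + T) + S - 1)*μ
        + (α * S * (α * T + S - 1) - (1-α)^2 * S * T) ≤ 0 := by
      by_cases h1 : μ = α * (S + T - 1) - (1-α)
      · rw [h1]
        nlinarith [mul_nonneg (mul_nonneg (by linarith : (0:ℝ) ≤ 1-α) (by linarith : (0:ℝ) ≤ S))
          (by linarith : (0:ℝ) ≤ T - 1)]
      by_cases h2 : μ = α * S
      · rw [h2]
        nlinarith [mul_nonneg (mul_nonneg (sq_nonneg (1-α)) (by linarith : (0:ℝ) ≤ S))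
          (by linarith : (0:ℝ) ≤ T)]
      -- generic case
      have hSL0 : SL ≠ 0 := by
        intro h0
        apply hv0
        have hR : ∀ j : Fin t, v (Sum.inr j) = 0 := by
          intro j
          have h5 := eqR j
          rw [h0] at h5
          have h3 : (μ - α * S) * v (Sum.inr j) = 0 := by linarith
          rcases mul_eq_zero.mp h3 with h4 | h4
          · exact absurd (by linarith : μ = α * S) h2
          · exact h4
        have hSR0 : SR = 0 := by
          rw [hSR]; exact Finset.sum_eq_zero fun j _ => hR j
        have hL : ∀ i : Fin s, v (Sum.inl i) = 0 := by
          intro i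
          have h5 := eqL i
          rw [h0, hSR0] at h5
          have h3 : (μ - (α * (S + T - 1) - (1-α))) * v (Sum.inl i) = 0 := by
            linear_combination -h5
          rcases mul_eq_zero.mp h3 with h4 | h4
          · exact absurd (by linarith : μ = α * (S + T - 1) - (1-α)) h1
          · exact h4
        funext u
        cases u with
        | inl i => exact hL i
        | inr j => exact hR j
      -- summed equations
      have E1 : α * (S + T - 1) * SL + (1-α) * ((S * SL - SL) + S * SR) = μ * SL := by
        have h0 := Finset.sum_congr rfl (fun i (_ : i ∈ (univ : Finset (Fin s))) => eqL i)
        simp only [Finset.sum_add_distrib, ← Finset.mul_sum, Finset.sum_sub_distrib,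
          Finset.sum_const, Finset.card_univ, Fintype.card_fin, nsmul_eq_mul] at h0
        rw [← hSdef] at h0
        linarith [h0]
      have E2 : α * S * SR + (1-α) * (T * SL) = μ * SR := by
        have h0 := Finset.sum_congr rfl (fun j (_ : j ∈ (univ : Finset (Fin t))) => eqR j)
        simp only [Finset.sum_add_distrib, ← Finset.mul_sum, Finset.sum_const,
          Finset.card_univ, Fintype.card_fin, nsmul_eq_mul] at h0
        rw [← hTdef] at h0
        linarith [h0]
      have hSR0 : SR ≠ 0 := by
        intro h0
        rw [h0] at E2
        have h3 : (1-α) * (T * SL) = 0 := by linarith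
        rcases mul_eq_zero.mp h3 with h4 | h4
        · linarith
        · rcases mul_eq_zero.mp h4 with h5 | h5
          · linarith
          · exact hSL0 h5
      have hE1' : (μ - (α * (S + T - 1) + (1-α)*(S-1))) * SL = (1-α) * S * SR := by
        linear_combination -E1
      have hE2' : (μ - α * S) * SR = (1-α) * T * SL := by
        linear_combination -E2
      have h3 : ((μ - (α * (S + T - 1) + (1-α)*(S-1))) * SL) * ((μ - α * S) * SR)
          = ((1-α) * S * SR) * ((1-α) * T * SL) := by rw [hE1', hE2']
      have key : (μ^2 - (α * (S + T) + S - 1)*μ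
          + (α * S * (α * T + S - 1) - (1-α)^2 * S * T)) * (SL * SR) = 0 := by
        linear_combination h3
      have h4 : μ^2 - (α * (S + T) + S - 1)*μ
          + (α * S * (α * T + S - 1) - (1-α)^2 * S * T) = 0 := by
        rcases mul_eq_zero.mp key with h4 | h4
        · exact h4
        · exact absurd h4 (mul_ne_zero hSL0 hSR0)
      linarith
    rw [hr]
    exact le_root _ _ μ hq


lemma quad_isGreatest (B C : ℝ) (hD : 0 ≤ B^2 - 4*C) :
    IsGreatest {x : ℝ | x^2 - B*x + C = 0} ((B + Real.sqrt (B^2-4*C))/2) :=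
  ⟨root_root B C hD, fun x hx => le_root B C x (le_of_eq hx)⟩

lemma hD_gen (α S T : ℝ) (hα0 : 0 ≤ α) (hα1 : α < 1) (hS : 1 ≤ S) (hT : 1 ≤ T) :
    0 ≤ (α * (S + T) + S - 1)^2 - 4 * (α * S * (α * T + S - 1) - (1-α)^2 * S * T) := by
  nlinarith [sq_nonneg (α*T + S - 1 - α*S),
    mul_nonneg (mul_nonneg (sq_nonneg (1-α)) (by linarith : (0:ℝ) ≤ S)) (by linarith : (0:ℝ) ≤ T)]

theorem rhoAlpha_case22 (α : ℝ) (hα0 : 0 ≤ α) (hα1 : α < 1)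
    (s n : ℕ) (hs : 1 ≤ s) (hn : n = s + 3 * s / 2 + 2) :
    IsGreatest {x : ℝ | x ^ 2 - (α * (n : ℝ) + (s : ℝ) - 1) * x
        + (2 * α - 1) * (s : ℝ) * ((3 * s / 2 : ℕ) : ℝ)
        + α * (s : ℝ) ^ 2 + (3 * α - 2) * (s : ℝ) = 0}
      (rhoAlpha α ((⊤ : SimpleGraph (Fin s)) ∨g (⊥ : SimpleGraph (Fin (3 * s / 2 + 2))))) ∧
    rhoAlpha α ((⊤ : SimpleGraph (Fin s)) ∨g (⊥ : SimpleGraph (Fin (3 * s / 2 + 2)))) =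
      (α * (n : ℝ) + (s : ℝ) - 1 +
        Real.sqrt ((α * (n : ℝ) + (s : ℝ) - 1) ^ 2
          - 4 * ((2 * α - 1) * (s : ℝ) * ((3 * s / 2 : ℕ) : ℝ)
            + α * (s : ℝ) ^ 2 + 3 * α * (s : ℝ) - 2 * (s : ℝ)))) / 2 := by
  have hS : (1:ℝ) ≤ (s:ℝ) := by exact_mod_cast hs
  have hM : (0:ℝ) ≤ ((3*s/2 : ℕ):ℝ) := Nat.cast_nonneg _
  have ht : 1 ≤ 3*s/2 + 2 := by omega
  have hIG := spec_isGreatest α hα0 hα1 s (3*s/2+2) hs ht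
  have hrho : rhoAlpha α ((⊤ : SimpleGraph (Fin s)) ∨g (⊥ : SimpleGraph (Fin (3*s/2+2))))
      = ((α * ((s:ℝ) + ((3*s/2+2:ℕ):ℝ)) + (s:ℝ) - 1 +
        Real.sqrt ((α * ((s:ℝ) + ((3*s/2+2:ℕ):ℝ)) + (s:ℝ) - 1)^2
          - 4 * (α * (s:ℝ) * (α * ((3*s/2+2:ℕ):ℝ) + (s:ℝ) - 1)
            - (1-α)^2 * (s:ℝ) * ((3*s/2+2:ℕ):ℝ))))/2) := hIG.csSup_eq
  have hTc : ((3*s/2+2 : ℕ):ℝ) = ((3*s/2 : ℕ):ℝ) + 2 := by push_cast; ring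
  have hnc : (n:ℝ) = (s:ℝ) + ((3*s/2 : ℕ):ℝ) + 2 := by rw [hn]; push_cast; ring
  have hBeq : α * ((s:ℝ) + ((3*s/2+2:ℕ):ℝ)) + (s:ℝ) - 1 = α * (n:ℝ) + (s:ℝ) - 1 := by
    rw [hTc, hnc]; ring
  have hArg : (α * ((s:ℝ) + ((3*s/2+2:ℕ):ℝ)) + (s:ℝ) - 1)^2
      - 4 * (α * (s:ℝ) * (α * ((3*s/2+2:ℕ):ℝ) + (s:ℝ) - 1)
        - (1-α)^2 * (s:ℝ) * ((3*s/2+2:ℕ):ℝ))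
      = (α * (n:ℝ) + (s:ℝ) - 1) ^ 2
          - 4 * ((2 * α - 1) * (s : ℝ) * ((3 * s / 2 : ℕ) : ℝ)
            + α * (s : ℝ) ^ 2 + 3 * α * (s : ℝ) - 2 * (s : ℝ)) := by
    rw [hTc, hnc]; ring
  have hpart2 : rhoAlpha α ((⊤ : SimpleGraph (Fin s)) ∨g (⊥ : SimpleGraph (Fin (3*s/2+2))))
      = (α * (n : ℝ) + (s : ℝ) - 1 +
        Real.sqrt ((α * (n : ℝ) + (s : ℝ) - 1) ^ 2
          - 4 * ((2 * α - 1) * (s : ℝ) * ((3 * s / 2 : ℕ) : ℝ)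
            + α * (s : ℝ) ^ 2 + 3 * α * (s : ℝ) - 2 * (s : ℝ)))) / 2 := by
    rw [hrho, hArg, hBeq]
  have hD' : 0 ≤ (α * (n:ℝ) + (s:ℝ) - 1) ^ 2
      - 4 * ((2 * α - 1) * (s : ℝ) * ((3 * s / 2 : ℕ) : ℝ)
        + α * (s : ℝ) ^ 2 + 3 * α * (s : ℝ) - 2 * (s : ℝ)) := by
    have h0 := hD_gen α (s:ℝ) ((3*s/2+2:ℕ):ℝ) hα0 hα1 hS (by rw [hTc]; linarith)
    rw [hArg] at h0
    exact h0
  refine ⟨⟨?_, ?_⟩, hpart2⟩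
  · show _ = 0
    rw [hpart2]
    have h1 := root_root (α * (n:ℝ) + (s:ℝ) - 1)
      ((2 * α - 1) * (s : ℝ) * ((3 * s / 2 : ℕ) : ℝ)
        + α * (s : ℝ) ^ 2 + 3 * α * (s : ℝ) - 2 * (s : ℝ)) hD'
    linear_combination h1
  · intro x hx
    simp only [Set.mem_setOf_eq] at hx
    rw [hpart2]
    exact le_root (α * (n:ℝ) + (s:ℝ) - 1)
      ((2 * α - 1) * (s : ℝ) * ((3 * s / 2 : ℕ) : ℝ)
        + α * (s : ℝ) ^ 2 + 3 * α * (s : ℝ) - 2 * (s : ℝ)) x (le_of_eq (by linear_combination hx))
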